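/- arXiv:1910.14665 — 2 statements merged into one kernel-verified Lean document; each statement's English description precedes it below -/
import Mathlib

section
/- Let (R, m) be a Noetherian local ring, I ⊆ m an ideal, and T = R[It, t^{-1}] the extended Rees algebra. Fix integers l > c ≥ 0 and an ideal J ⊆ R such that I^{l-c} ⊆ J. Let J' ⊆ T be the ideal generated by t^{-l}, all homogeneous elements of T of degree ≥ l, and J. Then the R-module homomorphism R/J → T/J' sending the class of 1 to the class of t^{-c} is a split injection of R-modules. -/
open LaurentPolynomial

/-- The extended Rees algebra `R[It, t⁻¹] = ⊕ₙ I^{max(n,0)} tⁿ ⊆ R[t, t⁻¹]`. -/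
def extendedReesAlgebra (R : Type*) [CommRing R] (I : Ideal R) :
    Subalgebra R (LaurentPolynomial R) where
  carrier := {p | ∀ n : ℤ, p.coeff n ∈ I ^ n.toNat}
  mul_mem' := by
    intro p q hp hq n
    classical
    rw [AddMonoidAlgebra.coeff_mul]
    simp only [Finsupp.sum]
    refine Submodule.sum_mem _ fun a _ => Submodule.sum_mem _ fun b _ => ?_
    split_ifs with h
    · subst h
      have h1 : p.coeff a * q.coeff b ∈ I ^ (a.toNat + b.toNat) := by
        rw [pow_add]; exact Ideal.mul_mem_mul (hp a) (hq b)
      exact Ideal.pow_le_pow_right (show (a + b).toNat ≤ a.toNat + b.toNat by omega) h1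
    · exact (I ^ n.toNat).zero_mem
  one_mem' := by
    intro n
    classical
    rw [AddMonoidAlgebra.one_def, AddMonoidAlgebra.coeff_single, Finsupp.single_apply]
    split_ifs with h
    · rw [← h, Int.toNat_zero, pow_zero, Ideal.one_eq_top]
      trivial
    · exact (I ^ n.toNat).zero_mem
  add_mem' := by
    intro p q hp hq n
    rw [AddMonoidAlgebra.coeff_add, Finsupp.add_apply]
    exact (I ^ n.toNat).add_mem (hp n) (hq n)
  zero_mem' := by intro n; rw [AddMonoidAlgebra.coeff_zero, Finsupp.coe_zero, Pi.zero_apply]; exact (I ^ n.toNat).zero_mem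
  algebraMap_mem' := by
    intro r n
    classical
    have hr : (algebraMap R (LaurentPolynomial R) r) = AddMonoidAlgebra.single (0 : ℤ) r := by
      simp [AddMonoidAlgebra.coe_algebraMap]
    rw [hr, AddMonoidAlgebra.coeff_single, Finsupp.single_apply]
    split_ifs with h
    · rw [← h, Int.toNat_zero, pow_zero, Ideal.one_eq_top]
      trivial
    · exact (I ^ n.toNat).zero_mem

lemma T_mem_extendedReesAlgebra {R : Type*} [CommRing R] (I : Ideal R) (n : ℤ) (hn : n ≤ 0) :
    (T n : LaurentPolynomial R) ∈ extendedReesAlgebra R I := by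
  intro m
  classical
  show (T n : LaurentPolynomial R).coeff m ∈ I ^ m.toNat
  rw [show (T n : LaurentPolynomial R) = AddMonoidAlgebra.single n 1 from rfl,
    AddMonoidAlgebra.coeff_single, Finsupp.single_apply]
  split_ifs with h
  · rw [show m.toNat = 0 by omega, pow_zero, Ideal.one_eq_top]
    trivial
  · exact (I ^ m.toNat).zero_mem


set_option synthInstance.maxHeartbeats 1000000
set_option maxHeartbeats 1000000

/-- Let `(R,𝔪)` be Noetherian local, `I ⊆ 𝔪` an ideal, `T = R[It,t⁻¹]` the extended Rees
algebra, `l > c ≥ 0` integers and `J` an ideal with `I^(l-c) ⊆ J`. Let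
`J' = (t⁻ˡ) + (homogeneous elements of degree ≥ l) + J·T`. Then the `R`-module map
`R/J → T/J'` sending the class of `1` to the class of `t⁻ᶜ` exists and is a split
injection of `R`-modules. -/
theorem extendedReesAlgebra_quotient_split_injection
    {R : Type*} [CommRing R] [IsNoetherianRing R] [IsLocalRing R]
    (I : Ideal R) (hI : I ≤ IsLocalRing.maximalIdeal R)
    (c l : ℕ) (hcl : c < l) (J : Ideal R) (hIJ : I ^ (l - c) ≤ J) :
    ∃ (f : (R ⧸ J) →ₗ[R] (extendedReesAlgebra R I ⧸ Ideal.span ({(⟨T (-(l : ℤ)), T_mem_extendedReesAlgebra I (-(l : ℤ)) (by omega)⟩ :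
                extendedReesAlgebra R I)} ∪
            {p : extendedReesAlgebra R I | ∃ n : ℤ, (l : ℤ) ≤ n ∧
                ∀ m : ℤ, m ≠ n → (p : LaurentPolynomial R).coeff m = 0} ∪
            (algebraMap R (extendedReesAlgebra R I) '' (J : Set R)))))
      (g : (extendedReesAlgebra R I ⧸ Ideal.span ({(⟨T (-(l : ℤ)), T_mem_extendedReesAlgebra I (-(l : ℤ)) (by omega)⟩ :
                extendedReesAlgebra R I)} ∪
            {p : extendedReesAlgebra R I | ∃ n : ℤ, (l : ℤ) ≤ n ∧
                ∀ m : ℤ, m ≠ n → (p : LaurentPolynomial R).coeff m = 0} ∪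
            (algebraMap R (extendedReesAlgebra R I) '' (J : Set R)))) →ₗ[R] (R ⧸ J)),
      f (Ideal.Quotient.mk J 1)
          = Ideal.Quotient.mk _
              ⟨T (-(c : ℤ)), T_mem_extendedReesAlgebra I (-(c : ℤ)) (by omega)⟩ ∧
      g.comp f = (LinearMap.id : (R ⧸ J) →ₗ[R] (R ⧸ J)) := by
    classical
  set T' := extendedReesAlgebra R I with hT'
  set S : Set T' := ({(⟨T (-(l : ℤ)), T_mem_extendedReesAlgebra I (-(l : ℤ)) (by omega)⟩ : T')} ∪
            {p : T' | ∃ n : ℤ, (l : ℤ) ≤ n ∧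
                ∀ m : ℤ, m ≠ n → (p : LaurentPolynomial R).coeff m = 0} ∪
            (algebraMap R T' '' (J : Set R))) with hS
  set J' : Ideal T' := Ideal.span S with hJ'
  -- the coefficient-extraction linear map
  set φ : T' →ₗ[R] R ⧸ J :=
    { toFun := fun p => Ideal.Quotient.mk J ((p : LaurentPolynomial R).coeff (-(c : ℤ)))
      map_add' := by
        intro p q
        show Submodule.Quotient.mk (((p + q : T') : LaurentPolynomial R).coeff (-(c : ℤ)))
            = Submodule.Quotient.mk ((p : LaurentPolynomial R).coeff (-(c : ℤ)))
              + Submodule.Quotient.mk ((q : LaurentPolynomial R).coeff (-(c : ℤ)))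
        rw [show ((p + q : T') : LaurentPolynomial R)
            = (p : LaurentPolynomial R) + (q : LaurentPolynomial R) from rfl,
          AddMonoidAlgebra.coeff_add, Finsupp.add_apply, Submodule.Quotient.mk_add]
      map_smul' := by
        intro r p
        show Submodule.Quotient.mk (((r • p : T') : LaurentPolynomial R).coeff (-(c : ℤ)))
            = r • Submodule.Quotient.mk ((p : LaurentPolynomial R).coeff (-(c : ℤ)))
        rw [show ((r • p : T') : LaurentPolynomial R) = r • (p : LaurentPolynomial R) from rfl,
          AddMonoidAlgebra.coeff_smul, Finsupp.smul_apply, Submodule.Quotient.mk_smul] } with hφ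
  -- key: φ kills every multiple of an element of J'
  have key : ∀ x ∈ J', ∀ t : T',
      ((t * x : T') : LaurentPolynomial R).coeff (-(c : ℤ)) ∈ J := by
    intro x hx
    refine Submodule.span_induction ?_ ?_ ?_ ?_ hx
    · rintro x (( h | h ) | ⟨r, hr, rfl⟩ ) t
      · -- x = t^{-l}
        have hx1 : (x : LaurentPolynomial R) = AddMonoidAlgebra.single (-(l:ℤ)) (1:R) :=
          congrArg Subtype.val h
        rw [show ((t * x : T') : LaurentPolynomial R)
            = (t : LaurentPolynomial R) * (x : LaurentPolynomial R) from rfl, hx1,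
          AddMonoidAlgebra.coeff_mul_single_apply, mul_one]
        have ht := t.2 (-(c:ℤ) - -(l:ℤ))
        have : (-(c:ℤ) - -(l:ℤ)).toNat = l - c := by omega
        rw [this] at ht
        exact hIJ ht
      · -- x homogeneous of degree n ≥ l
        obtain ⟨n, hn, hx0⟩ := h
        have hxs : (x : LaurentPolynomial R) = AddMonoidAlgebra.single n ((x : LaurentPolynomial R).coeff n) := by
          refine LaurentPolynomial.ext fun m => ?_
          rcases eq_or_ne m n with rfl | hm
          · rw [AddMonoidAlgebra.coeff_single, Finsupp.single_eq_same]
          · rw [hx0 m hm, AddMonoidAlgebra.coeff_single, Finsupp.single_apply,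
              if_neg (fun h => hm h.symm)]
        have : ((t * x : T') : LaurentPolynomial R)
            = (t : LaurentPolynomial R) * AddMonoidAlgebra.single n ((x : LaurentPolynomial R).coeff n) := by
          rw [← hxs]; rfl
        rw [this, AddMonoidAlgebra.coeff_mul_single_apply]
        refine J.mul_mem_left _ ?_
        have hxn := x.2 n
        refine hIJ (Ideal.pow_le_pow_right (by omega) hxn)
      · -- x = algebraMap r, r ∈ J
        have : ((t * algebraMap R T' r : T') : LaurentPolynomial R)
            = (t : LaurentPolynomial R) * AddMonoidAlgebra.single (0 : ℤ) r := by
          rw [show ((t * algebraMap R T' r : T') : LaurentPolynomial R)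
              = (t : LaurentPolynomial R) * (algebraMap R (LaurentPolynomial R) r) from rfl]
          congr 1
        rw [this, AddMonoidAlgebra.coeff_mul_single_apply]
        exact J.mul_mem_left _ hr
    · intro t
      rw [mul_zero]
      simp only [ZeroMemClass.coe_zero, AddMonoidAlgebra.coeff_zero, Finsupp.coe_zero, Pi.zero_apply]
      exact J.zero_mem
    · intro x y _ _ hx hy t
      rw [mul_add]
      rw [show (((t * x + t * y : T')) : LaurentPolynomial R)
          = ((t * x : T') : LaurentPolynomial R) + ((t * y : T') : LaurentPolynomial R) from rfl,
        AddMonoidAlgebra.coeff_add, Finsupp.add_apply]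
      exact J.add_mem (hx t) (hy t)
    · intro a x _ hx t
      rw [smul_eq_mul, show t * (a * x) = (t * a) * x by ring]
      exact hx (t * a)
  -- φ descends to g
  have hker : (J'.restrictScalars R) ≤ LinearMap.ker φ := by
    intro x hx
    rw [LinearMap.mem_ker]
    show Ideal.Quotient.mk J ((x : LaurentPolynomial R).coeff (-(c : ℤ))) = 0
    rw [Ideal.Quotient.eq_zero_iff_mem]
    have := key x hx 1
    rwa [one_mul] at this
  set g : (T' ⧸ J') →ₗ[R] R ⧸ J :=
    (Submodule.liftQ (J'.restrictScalars R) φ hker).comp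
      ((Submodule.Quotient.restrictScalarsEquiv R J').symm.toLinearMap) with hg
  -- f
  set tc : T' := ⟨T (-(c : ℤ)), T_mem_extendedReesAlgebra I (-(c : ℤ)) (by omega)⟩ with htc
  set x0 : T' ⧸ J' := Ideal.Quotient.mk J' tc with hx0
  have hfker : (J : Submodule R R) ≤ LinearMap.ker (LinearMap.toSpanSingleton R (T' ⧸ J') x0) :=
    by
    intro r hr
    rw [LinearMap.mem_ker, LinearMap.toSpanSingleton_apply, hx0,
      show r • (Ideal.Quotient.mk J' tc) = Ideal.Quotient.mk J' (r • tc) from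
        (map_smul (Ideal.Quotient.mkₐ R J') r tc).symm,
      Ideal.Quotient.eq_zero_iff_mem]
    have hmem : algebraMap R T' r ∈ J' := Ideal.subset_span (by
      exact Or.inr ⟨r, hr, rfl⟩)
    have : r • tc = algebraMap R T' r * tc := by rw [Algebra.smul_def]
    rw [this]
    exact J'.mul_mem_right _ hmem
  set f : (R ⧸ J) →ₗ[R] T' ⧸ J' :=
    Submodule.liftQ (J : Submodule R R) (LinearMap.toSpanSingleton R (T' ⧸ J') x0) hfker with hf
  refine ⟨f, g, ?_, ?_⟩
  · show f (Submodule.Quotient.mk 1) = x0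
    rw [hf, Submodule.liftQ_apply, LinearMap.toSpanSingleton_apply, one_smul]
  · refine LinearMap.ext fun xq => ?_
    obtain ⟨r, rfl⟩ := Ideal.Quotient.mk_surjective xq
    show g (f (Ideal.Quotient.mk J r)) = Ideal.Quotient.mk J r
    have h1 : f (Ideal.Quotient.mk J r) = Ideal.Quotient.mk J' (r • tc) := by
      rw [show Ideal.Quotient.mk J r = Submodule.Quotient.mk r from rfl, hf,
        Submodule.liftQ_apply, LinearMap.toSpanSingleton_apply, hx0]
      exact (map_smul (Ideal.Quotient.mkₐ R J') r tc).symm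
    rw [h1, hg]
    simp only [LinearMap.comp_apply, LinearEquiv.coe_toLinearMap]
    rw [show (Ideal.Quotient.mk J' (r • tc) : T' ⧸ J') = Submodule.Quotient.mk (r • tc) from rfl,
      Submodule.Quotient.restrictScalarsEquiv_symm_mk, Submodule.liftQ_apply]
    show Ideal.Quotient.mk J (((r • tc : T') : LaurentPolynomial R).coeff (-(c : ℤ)))
        = Ideal.Quotient.mk J r
    rw [show ((r • tc : T') : LaurentPolynomial R) = r • (tc : LaurentPolynomial R) from rfl,
      AddMonoidAlgebra.coeff_smul, Finsupp.smul_apply, htc]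
    rw [show ((⟨T (-(c:ℤ)), T_mem_extendedReesAlgebra I (-(c:ℤ)) (by omega)⟩ : T')
        : LaurentPolynomial R) = AddMonoidAlgebra.single (-(c:ℤ)) (1:R) from rfl]
    simp
end

section
/- Let B be a commutative ring and x_1, …, x_n ∈ B a regular sequence with (x_1, …, x_n)B ≠ B. Let B^◇ = (∏_{i∈ℕ} B)/(⊕_{i∈ℕ} B) be the quotient of the countable product of copies of B by the direct sum. Then the images of x_1, …, x_n (via the diagonal) form a regular sequence on B^◇, and (x_1, …, x_n)B^◇ ≠ B^◇. -/
/-- The ideal of eventually-zero (finitely supported) sequences in `∏_{ℕ} B`. -/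
def eventuallyZeroIdeal (B : Type*) [CommRing B] : Ideal (ℕ → B) where
  carrier := {f | (Function.support f).Finite}
  zero_mem' := by simp [Function.support_zero]
  add_mem' := by
    intro f g hf hg
    exact (hf.union hg).subset (Function.support_add f g)
  smul_mem' := by
    intro c f hf
    refine hf.subset ?_
    intro x hx
    rw [Function.mem_support] at hx ⊢
    intro h0
    exact hx (by simp [h0])

/-- `IsSMulRegular` on `R ⧸ I` phrased elementwise. -/
lemma auxSMulRegIff (R : Type*) [CommRing R] (I : Ideal R) (x : R) :
    IsSMulRegular (R ⧸ (I • ⊤ : Submodule R R)) x ↔ ∀ b : R, x * b ∈ I → b ∈ I := by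
  have hI : (I • ⊤ : Submodule R R) = I := by rw [smul_eq_mul, Ideal.mul_top]
  constructor
  · intro h b hxb
    have h0 : x • (Submodule.Quotient.mk b : R ⧸ (I • ⊤ : Submodule R R)) = x • 0 := by
      rw [smul_zero, ← Submodule.Quotient.mk_smul, Submodule.Quotient.mk_eq_zero, hI,
        smul_eq_mul]
      exact hxb
    have := h h0
    rwa [Submodule.Quotient.mk_eq_zero, hI] at this
  · intro h a b hab
    obtain ⟨p, rfl⟩ := Submodule.Quotient.mk_surjective _ a
    obtain ⟨q, rfl⟩ := Submodule.Quotient.mk_surjective _ b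
    have hab' : x • (Submodule.Quotient.mk p : R ⧸ (I • ⊤ : Submodule R R))
        = x • Submodule.Quotient.mk q := hab
    rw [← Submodule.Quotient.mk_smul, ← Submodule.Quotient.mk_smul,
      Submodule.Quotient.eq, ← smul_sub, hI, smul_eq_mul] at hab'
    rename' hab' => hab
    rw [Submodule.Quotient.eq, hI]
    exact h _ hab

/-- Membership in the ideal generated by diagonal elements is eventual componentwise
membership. -/
lemma memDiagIff (B : Type*) [CommRing B] (ts : List B) (f : ℕ → B) :
    Ideal.Quotient.mk (eventuallyZeroIdeal B) f ∈
      Ideal.ofList (ts.map fun x => Ideal.Quotient.mk (eventuallyZeroIdeal B) (fun _ => x)) ↔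
    ∃ N, ∀ i, N ≤ i → f i ∈ Ideal.ofList ts := by
  set mkE := Ideal.Quotient.mk (eventuallyZeroIdeal B) with hmkE
  have hmapeq : (ts.map fun x => mkE (fun _ => x)) =
      (ts.map (fun x => (fun _ => x : ℕ → B))).map mkE := by
    simp [List.map_map, Function.comp]
  constructor
  · intro hmem
    rw [hmapeq, ← Ideal.map_ofList,
      Ideal.mem_map_iff_of_surjective _ Ideal.Quotient.mk_surjective] at hmem
    obtain ⟨g, hg, hgf⟩ := hmem
    have hcomp : ∀ i, g i ∈ Ideal.ofList ts := by
      intro i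
      have hle : Ideal.ofList (ts.map (fun x => (fun _ => x : ℕ → B))) ≤
          Ideal.comap (Pi.evalRingHom (fun _ => B) i) (Ideal.ofList ts) := by
        apply Ideal.span_le.mpr
        rintro y hy
        simp only [Set.mem_setOf_eq, List.mem_map] at hy
        obtain ⟨x, hx, rfl⟩ := hy
        exact Ideal.subset_span hx
      exact hle hg
    have hE : g - f ∈ eventuallyZeroIdeal B := by
      rw [← Ideal.Quotient.eq]
      exact hgf
    have hfin : (Function.support (g - f)).Finite := hE
    obtain ⟨N, hN⟩ := hfin.bddAbove
    refine ⟨N + 1, fun i hi => ?_⟩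
    have hz : g i - f i = 0 := by
      by_contra hne
      have : i ∈ Function.support (g - f) := by
        rw [Function.mem_support]
        simpa [Pi.sub_apply] using hne
      have := hN this
      omega
    rw [show f i = g i from (sub_eq_zero.mp hz).symm]
    exact hcomp i
  · rintro ⟨N, hN⟩
    have hrange : {r : B | r ∈ ts} = Set.range (fun j : Fin ts.length => ts[j]) := by
      ext a
      simp [List.mem_iff_getElem, Fin.exists_iff]
    have key : ∀ i, ∃ c : Fin ts.length → B, N ≤ i → ∑ j, c j * ts[j] = f i := by
      intro i
      by_cases h : N ≤ i
      · have hm := hN i h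
        rw [Ideal.ofList, hrange] at hm
        obtain ⟨c, hc⟩ := (Submodule.mem_span_range_iff_exists_fun B).mp hm
        exact ⟨c, fun _ => by simpa [smul_eq_mul] using hc⟩
      · exact ⟨0, fun h' => absurd h' h⟩
    choose c hc using key
    set g : ℕ → B := fun i => if N ≤ i then f i else 0 with hg
    have hfg : mkE f = mkE g := by
      rw [Ideal.Quotient.eq]
      show (Function.support (f - g)).Finite
      refine Set.Finite.subset (Set.finite_Iio N) ?_
      intro i hi
      rw [Function.mem_support] at hi
      rw [Set.mem_Iio]
      by_contra h
      push_neg at h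
      exact hi (by simp [Pi.sub_apply, hg, if_pos h])
    rw [hfg]
    have hgsum : g = ∑ j : Fin ts.length,
        (fun i => if N ≤ i then c i j else 0) * (fun _ => ts[j]) := by
      funext i
      simp only [Finset.sum_apply, Pi.mul_apply]
      by_cases h : N ≤ i
      · simp only [hg, if_pos h]
        rw [← hc i h]
      · simp [hg, if_neg h]
    rw [hgsum, map_sum]
    apply Ideal.sum_mem
    intro j _
    rw [map_mul]
    refine Ideal.mul_mem_left _ _ (Ideal.subset_span ?_)
    exact List.mem_map.mpr ⟨ts[j], List.getElem_mem _, rfl⟩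

/-- Gabber's construction: if `x₁, …, xₙ` is a regular sequence on `B` generating a proper
ideal, then the diagonal images of the `xᵢ` form a regular sequence on
`B^◇ = (∏_ℕ B)/(⊕_ℕ B)`, generating a proper ideal. -/
theorem isWeaklyRegular_diagonal_ultraproduct
    (B : Type*) [CommRing B] (rs : List B)
    (hreg : RingTheory.Sequence.IsWeaklyRegular B rs)
    (hproper : Ideal.ofList rs ≠ ⊤) :
    RingTheory.Sequence.IsWeaklyRegular ((ℕ → B) ⧸ eventuallyZeroIdeal B)
        (rs.map fun x => Ideal.Quotient.mk (eventuallyZeroIdeal B) (fun _ => x)) ∧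
      Ideal.ofList
          (rs.map fun x => Ideal.Quotient.mk (eventuallyZeroIdeal B) (fun _ => x)) ≠ ⊤ := by
  set mkE := Ideal.Quotient.mk (eventuallyZeroIdeal B) with hmkE
  constructor
  · rw [RingTheory.Sequence.isWeaklyRegular_iff]
    intro i hi
    rw [List.length_map] at hi
    have e1 : (List.map (fun x => mkE fun _ => x) rs).take i
        = List.map (fun x => mkE fun _ => x) (rs.take i) := List.map_take.symm
    simp only [List.getElem_map]
    rw [e1, auxSMulRegIff]
    intro b hb
    obtain ⟨f, rfl⟩ := Ideal.Quotient.mk_surjective b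
    rw [← map_mul] at hb
    obtain ⟨N, hN⟩ := (memDiagIff B (rs.take i) _).mp hb
    refine (memDiagIff B (rs.take i) f).mpr ⟨N, fun k hk => ?_⟩
    have hx := (auxSMulRegIff B (Ideal.ofList (rs.take i)) rs[i]).mp
      (hreg.regular_mod_prev i hi)
    exact hx (f k) (by simpa using hN k hk)
  · intro htop
    have h1 : mkE 1 ∈ Ideal.ofList (rs.map fun x => mkE (fun _ => x)) := by
      rw [htop]; exact Submodule.mem_top
    obtain ⟨N, hN⟩ := (memDiagIff B rs 1).mp h1
    exact hproper ((Ideal.eq_top_iff_one _).mpr (by simpa using hN N le_rfl))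
end
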